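/- arXiv:0902.1932 — 2 statements merged into one kernel-verified Lean document; each statement's English description precedes it below -/
import Mathlib

section
/- The cardinality constrained matroid polytope P^c(E) is completely described by the following linear system: P^c(E) equals the set of all x ∈ ℝ^E satisfying (1) the rank induced forbidden set inequalities (c_{p+1} − r(F))·x(F) − (r(F) − c_p)·x(E∖F) ≤ c_p·(c_{p+1} − r(F)) for all F ⊆ E with c_p < r(F) < c_{p+1} for some p ∈ {1, …, m−1}, (2) the cardinality bounds c_1 ≤ x(E) ≤ c_m, (3) the rank inequalities x(F) ≤ r(F) for all nonempty F ⊆ E, and (4) the nonnegativity constraints x_e ≥ 0 for all e ∈ E. -/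
open Finset

/-- A (loopless) matroid on a finite ground set, given by its independent sets. -/
structure FinMatroid (α : Type*) [Fintype α] [DecidableEq α] where
  Indep : Finset α → Prop
  empty_indep : Indep ∅
  subset_indep : ∀ ⦃I J : Finset α⦄, Indep J → I ⊆ J → Indep I
  exchange : ∀ ⦃I J : Finset α⦄, Indep I → Indep J → I.card < J.card →
    ∃ e ∈ J \ I, Indep (insert e I)
  loopless : ∀ e : α, Indep {e}

variable {α : Type*} [Fintype α] [DecidableEq α]

open Classical in
/-- The rank of a set: the maximum cardinality of an independent subset. -/
noncomputable def FinMatroid.r (M : FinMatroid α) (F : Finset α) : ℕ :=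
  (F.powerset.filter M.Indep).sup Finset.card

/-- incidence vector -/
noncomputable def incVec (I : Finset α) : α → ℝ := fun e => if e ∈ I then 1 else 0

/-- x(S) = ∑_{e ∈ S} x_e -/
noncomputable def fsum (x : α → ℝ) (S : Finset α) : ℝ := ∑ e ∈ S, x e

/-- closed set -/
def FinMatroid.ClosedSet (M : FinMatroid α) (F : Finset α) : Prop :=
  ∀ e ∉ F, M.r F < M.r (insert e F)

/-- F is separable -/
def FinMatroid.Separable (M : FinMatroid α) (F : Finset α) : Prop :=
  ∃ F₁ F₂ : Finset α, F₁ ≠ ∅ ∧ F₂ ≠ ∅ ∧ Disjoint F₁ F₂ ∧ F₁ ∪ F₂ = F ∧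
    M.r F₁ + M.r F₂ ≤ M.r F

def FinMatroid.Inseparable (M : FinMatroid α) (F : Finset α) : Prop :=
  ¬ M.Separable F

/-- the k-rank r^k(F) = k - r(E \ F), as an integer -/
noncomputable def FinMatroid.krank (M : FinMatroid α) (k : ℕ) (F : Finset α) : ℤ :=
  (k : ℤ) - (M.r Fᶜ : ℤ)

/-- F is k-separable -/
noncomputable def FinMatroid.kSeparable (M : FinMatroid α) (k : ℕ) (F : Finset α) : Prop :=
  ∃ F₁ F₂ : Finset α, F₁ ≠ ∅ ∧ F₂ ≠ ∅ ∧ Disjoint F₁ F₂ ∧ F₁ ∪ F₂ = F ∧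
    M.krank k F₁ + M.krank k F₂ = M.krank k F

noncomputable def FinMatroid.kInseparable (M : FinMatroid α) (k : ℕ) (F : Finset α) : Prop :=
  ¬ M.kSeparable k F

/-- convex hull of incidence vectors of independent sets of cardinality exactly k -/
noncomputable def exactPolytope (M : FinMatroid α) (k : ℕ) : Set (α → ℝ) :=
  convexHull ℝ {x | ∃ I : Finset α, M.Indep I ∧ I.card = k ∧ x = incVec I}

/-- the cardinality constrained matroid polytope P^c(E) -/
noncomputable def cardPolytope (M : FinMatroid α) {m : ℕ} (c : Fin m → ℕ) : Set (α → ℝ) :=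
  convexHull ℝ {x | ∃ I : Finset α, M.Indep I ∧ (∃ p : Fin m, I.card = c p) ∧ x = incVec I}

/-- dimension of (the affine hull of) a subset of ℝ^E -/
noncomputable def polyDim (s : Set (α → ℝ)) : ℕ :=
  Module.finrank ℝ (affineSpan ℝ s).direction

/-- `a · x ≤ a₀` defines a facet of `P` -/
noncomputable def IsFacet (P : Set (α → ℝ)) (a : α → ℝ) (a₀ : ℝ) : Prop :=
  (∀ x ∈ P, ∑ e, a e * x e ≤ a₀) ∧
  polyDim {x ∈ P | ∑ e, a e * x e = a₀} + 1 = polyDim P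


section Lemmas
variable (M : FinMatroid α)

open Classical in
lemma card_le_r {I F : Finset α} (hI : M.Indep I) (hIF : I ⊆ F) : I.card ≤ M.r F := by
  classical
  have : I ∈ F.powerset.filter M.Indep := by
    simp [Finset.mem_filter, Finset.mem_powerset, hIF, hI]
  exact Finset.le_sup (f := Finset.card) this

open Classical in
lemma exists_r_attained (F : Finset α) : ∃ I ⊆ F, M.Indep I ∧ I.card = M.r F := by
  classical
  have hne : (F.powerset.filter M.Indep).Nonempty :=
    ⟨∅, by simp [Finset.mem_filter, M.empty_indep]⟩
  obtain ⟨I, hI, hIr⟩ := Finset.exists_mem_eq_sup _ hne Finset.card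
  simp only [Finset.mem_filter, Finset.mem_powerset] at hI
  exact ⟨I, hI.1, hI.2, by rw [FinMatroid.r]; convert hIr.symm⟩

lemma r_mono {F G : Finset α} (h : F ⊆ G) : M.r F ≤ M.r G := by
  obtain ⟨I, hIF, hI, hcard⟩ := exists_r_attained M F
  rw [← hcard]; exact card_le_r M hI (hIF.trans h)

lemma r_insert_le (e : α) (F : Finset α) : M.r (insert e F) ≤ M.r F + 1 := by
  obtain ⟨I, hIF, hI, hcard⟩ := exists_r_attained M (insert e F)
  have h1 : I.erase e ⊆ F := by
    intro x hx
    have := hIF (Finset.mem_of_mem_erase hx)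
    rcases Finset.mem_insert.1 this with h | h
    · exact absurd h (Finset.ne_of_mem_erase hx)
    · exact h
  have h2 : (I.erase e).card ≤ M.r F :=
    card_le_r M (M.subset_indep hI (Finset.erase_subset _ _)) h1
  have h3 : I.card ≤ (I.erase e).card + 1 := by
    by_cases he : e ∈ I
    · have := Finset.card_erase_add_one he; omega
    · rw [Finset.erase_eq_of_notMem he]; omega
  omega

lemma indep_extend {J F : Finset α} (hJ : M.Indep J) (hJF : J ⊆ F) (h : J.card < M.r F) :
    ∃ f ∈ F, f ∉ J ∧ M.Indep (insert f J) := by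
  obtain ⟨I, hIF, hI, hcard⟩ := exists_r_attained M F
  obtain ⟨f, hf, hind⟩ := M.exchange hJ hI (by omega)
  rw [Finset.mem_sdiff] at hf
  exact ⟨f, hIF hf.1, hf.2, hind⟩

lemma fsum_incVec (I S : Finset α) : fsum (incVec I) S = ((I ∩ S).card : ℝ) := by
  classical
  rw [fsum]
  simp only [incVec]
  rw [Finset.sum_boole]
  congr 1
  rw [Finset.filter_mem_eq_inter, Finset.inter_comm]

lemma fsum_incVec_univ (I : Finset α) : fsum (incVec I) Finset.univ = (I.card : ℝ) := by
  rw [fsum_incVec]; simp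

end Lemmas

section Easy
variable (M : FinMatroid α)

lemma fsum_comb (x y : α → ℝ) (a b : ℝ) (S : Finset α) :
    fsum (a • x + b • y) S = a * fsum x S + b * fsum y S := by
  simp only [fsum, Pi.add_apply, Pi.smul_apply, smul_eq_mul, Finset.sum_add_distrib,
    Finset.mul_sum]

lemma fsum_compl (x : α → ℝ) (F : Finset α) :
    fsum x Fᶜ = fsum x Finset.univ - fsum x F := by
  simp only [fsum]
  rw [eq_sub_iff_add_eq, add_comm, Finset.sum_add_sum_compl]

lemma fsum_insert {x : α → ℝ} {e : α} {S : Finset α} (h : e ∉ S) :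
    fsum x (insert e S) = x e + fsum x S := Finset.sum_insert h

lemma fsum_le_of_nonneg {x : α → ℝ} (hx : ∀ e, 0 ≤ x e) {F G : Finset α} (h : F ⊆ G) :
    fsum x F ≤ fsum x G :=
  Finset.sum_le_sum_of_subset_of_nonneg h (fun e _ _ => hx e)

/-- generators satisfy the forbidden-set inequality -/
lemma gen_forbidden {m : ℕ} (c : Fin m → ℕ) (hmono : StrictMono c)
    {I : Finset α} (hI : M.Indep I) (q : Fin m) (hq : I.card = c q)
    (F : Finset α) (p : Fin m) (hp : p.val + 1 < m)
    (h1 : c p < M.r F) (h2 : M.r F < c ⟨p.val + 1, hp⟩) :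
    ((c ⟨p.val + 1, hp⟩ : ℝ) - M.r F) * fsum (incVec I) F
      - ((M.r F : ℝ) - c p) * fsum (incVec I) Fᶜ
      ≤ (c p : ℝ) * ((c ⟨p.val + 1, hp⟩ : ℝ) - M.r F) := by
  have hIF : ((I ∩ F).card : ℝ) ≤ (M.r F : ℝ) := by
    exact_mod_cast card_le_r M (M.subset_indep hI (Finset.inter_subset_left)) Finset.inter_subset_right
  have hsI : ((I ∩ F).card : ℝ) ≤ (I.card : ℝ) := by
    exact_mod_cast Finset.card_le_card (Finset.inter_subset_left)
  have hcompl : fsum (incVec I) Fᶜ = (I.card : ℝ) - ((I ∩ F).card : ℝ) := by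
    rw [fsum_compl, fsum_incVec_univ, fsum_incVec]
  rw [fsum_incVec, hcompl, hq]
  have h1' : (c p : ℝ) < (M.r F : ℝ) := by exact_mod_cast h1
  have h2' : (M.r F : ℝ) < (c ⟨p.val + 1, hp⟩ : ℝ) := by exact_mod_cast h2
  have hs0 : (0:ℝ) ≤ ((I ∩ F).card : ℝ) := Nat.cast_nonneg _
  set s : ℝ := ((I ∩ F).card : ℝ)
  set r : ℝ := (M.r F : ℝ)
  rw [hq] at hsI
  -- case split on q vs p
  rcases le_or_gt q p with hqp | hpq
  · have hcq : (c q : ℝ) ≤ (c p : ℝ) := by exact_mod_cast hmono.monotone hqp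
    have hscp : s ≤ (c p : ℝ) := hsI.trans hcq
    nlinarith [mul_nonneg (sub_nonneg.2 hscp) (sub_nonneg.2 h2'.le)]
  · have hq1 : (c ⟨p.val + 1, hp⟩ : ℝ) ≤ (c q : ℝ) := by
      have : (⟨p.val + 1, hp⟩ : Fin m) ≤ q := by
        rw [Fin.le_def]; simp; omega
      exact_mod_cast hmono.monotone this
    have hsr : s ≤ r := hIF
    nlinarith
end Easy

section Chain
variable (M : FinMatroid α)

lemma chain_greedy (n : ℕ) (G : ℕ → Finset α) (hG0 : G 0 = ∅)
    (hGstep : ∀ j < n, ∃ e, G (j+1) = insert e (G j))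
    (hGn : G n = Finset.univ) (k : ℕ) (hk : k ≤ M.r Finset.univ) :
    ∃ I, M.Indep I ∧ I.card = k ∧
      ∀ j ≤ n, ((I ∩ G j).card) = min (M.r (G j)) k := by
  have aux : ∀ j ≤ n, ∃ J, J ⊆ G j ∧ M.Indep J ∧ J.card = min (M.r (G j)) k ∧
      ∀ j' ≤ j, min (M.r (G j')) k ≤ (J ∩ G j').card := by
    intro j
    induction j with
    | zero =>
      intro _
      refine ⟨∅, by simp, M.empty_indep, ?_, ?_⟩
      · have : M.r (G 0) = 0 := by
          rw [hG0]
          obtain ⟨I, hIs, _, hc⟩ := exists_r_attained M (∅ : Finset α)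
          have := Finset.subset_empty.1 hIs
          simp [this] at hc
          omega
        simp [this]
      · intro j' hj'
        interval_cases j'
        have : M.r (G 0) = 0 := by
          rw [hG0]
          obtain ⟨I, hIs, _, hc⟩ := exists_r_attained M (∅ : Finset α)
          have := Finset.subset_empty.1 hIs
          simp [this] at hc
          omega
        simp [this]
    | succ j ih =>
      intro hjn
      obtain ⟨J, hJsub, hJind, hJcard, hJints⟩ := ih (by omega)
      obtain ⟨e, he⟩ := hGstep j (by omega)
      have hsub : G j ⊆ G (j+1) := by rw [he]; exact Finset.subset_insert _ _
      have hrmono : M.r (G j) ≤ M.r (G (j+1)) := r_mono M hsub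
      have hrstep : M.r (G (j+1)) ≤ M.r (G j) + 1 := by
        rw [he]; exact r_insert_le M e (G j)
      by_cases hmin : min (M.r (G (j+1))) k = min (M.r (G j)) k
      · refine ⟨J, hJsub.trans hsub, hJind, by rw [hmin]; exact hJcard, ?_⟩
        intro j' hj'
        rcases Nat.lt_succ_iff_lt_or_eq.1 (Nat.lt_succ_of_le hj') with h | h
        · exact hJints j' (by omega)
        · subst h
          have : J ∩ G (j+1) = J := Finset.inter_eq_left.2 (hJsub.trans hsub)
          rw [this, hJcard, hmin]
      · have hminstep : min (M.r (G (j+1))) k = min (M.r (G j)) k + 1 := by omega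
        have hJlt : J.card < M.r (G (j+1)) := by omega
        obtain ⟨f, hfG, hfJ, hfind⟩ := indep_extend M hJind (hJsub.trans hsub) hJlt
        refine ⟨insert f J, ?_, hfind, ?_, ?_⟩
        · exact Finset.insert_subset hfG (hJsub.trans hsub)
        · rw [Finset.card_insert_of_notMem hfJ, hJcard, hminstep]
        · intro j' hj'
          rcases Nat.lt_succ_iff_lt_or_eq.1 (Nat.lt_succ_of_le hj') with h | h
          · calc min (M.r (G j')) k ≤ (J ∩ G j').card := hJints j' (by omega)
              _ ≤ ((insert f J) ∩ G j').card :=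
                Finset.card_le_card (Finset.inter_subset_inter (Finset.subset_insert _ _) le_rfl)
          · subst h
            have : (insert f J) ∩ G (j+1) = insert f J :=
              Finset.inter_eq_left.2 (Finset.insert_subset hfG (hJsub.trans hsub))
            rw [this, Finset.card_insert_of_notMem hfJ, hJcard, hminstep]
  obtain ⟨J, hJsub, hJind, hJcard, hJints⟩ := aux n le_rfl
  have hJk : J.card = k := by
    rw [hJcard, hGn]; omega
  refine ⟨J, hJind, hJk, ?_⟩
  intro j hj
  have hlow := hJints j hj
  have hup1 : (J ∩ G j).card ≤ M.r (G j) :=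
    card_le_r M (M.subset_indep hJind Finset.inter_subset_left) Finset.inter_subset_right
  have hup2 : (J ∩ G j).card ≤ k := by
    rw [← hJk]; exact Finset.card_le_card Finset.inter_subset_left
  omega

end Chain

lemma abel_sum (u a : ℕ → ℝ) (n : ℕ) :
    ∑ i ∈ Finset.range n, u i * a i
      = (∑ j ∈ Finset.range n, (u j - u (j+1)) * (∑ i ∈ Finset.range (j+1), a i))
        + u n * ∑ i ∈ Finset.range n, a i := by
  induction n with
  | zero => simp
  | succ n ih =>
    rw [Finset.sum_range_succ (fun i => u i * a i), ih,
      Finset.sum_range_succ (fun j => (u j - u (j+1)) * (∑ i ∈ Finset.range (j+1), a i)),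
      Finset.sum_range_succ a n]
    ring

lemma arith_case1 {a b lam : ℝ} (h : a ≤ b) : a ≤ (1-lam)*b + lam*b := by
  have : (1-lam)*b + lam*b = b := by ring
  linarith

lemma arith_case2 {k0 k1 r t lam fx : ℝ} (hk : k0 < k1)
    (hforb : (k1 - r)*fx - (r - k0)*(t - fx) ≤ k0*(k1 - r))
    (hteq : t = (1-lam)*k0 + lam*k1) : fx ≤ (1-lam)*k0 + lam*r := by
  have hkey : (k1-k0)*fx ≤ (k1-k0)*((1-lam)*k0+lam*r) := by
    calc (k1-k0)*fx ≤ k0*(k1-r) + (r-k0)*t := by linarith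
      _ = k0*(k1-r) + (r-k0)*((1-lam)*k0+lam*k1) := by rw [← hteq]
      _ = (k1-k0)*((1-lam)*k0+lam*r) := by ring
  exact le_of_mul_le_mul_left hkey (by linarith)

lemma arith_case3 {k0 k1 t lam fx : ℝ} (hsub : fx ≤ t)
    (hteq : t = (1-lam)*k0 + lam*k1) : fx ≤ (1-lam)*k0 + lam*k1 := hteq ▸ hsub

set_option maxHeartbeats 2000000 in
lemma mem_hull_of_system {α : Type*} [Fintype α] [DecidableEq α]
    (M : FinMatroid α)
    {m : ℕ} (c : Fin m → ℕ) (hm : 2 ≤ m) (hmono : StrictMono c)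
    (hlast : c ⟨m - 1, Nat.sub_lt (Nat.lt_of_lt_of_le (by decide) hm) Nat.one_pos⟩ ≤ M.r Finset.univ) (x : α → ℝ)
    (hx1 : ∀ (F : Finset α) (p : Fin m) (hp : p.val + 1 < m),
          c p < M.r F → M.r F < c ⟨p.val + 1, hp⟩ → ((c ⟨p.val + 1, hp⟩ : ℝ) - M.r F) * fsum x F - ((M.r F : ℝ) - c p) * fsum x Fᶜ ≤ (c p : ℝ) * ((c ⟨p.val + 1, hp⟩ : ℝ) - M.r F))
    (hx2 : (c ⟨0, Nat.lt_of_lt_of_le (by decide) hm⟩ : ℝ) ≤ fsum x Finset.univ)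
    (hx3 : fsum x Finset.univ ≤ (c ⟨m - 1, Nat.sub_lt (Nat.lt_of_lt_of_le (by decide) hm) Nat.one_pos⟩ : ℝ))
    (hx4 : ∀ F : Finset α, F ≠ ∅ → fsum x F ≤ (M.r F : ℝ))
    (hx5 : ∀ e : α, 0 ≤ x e) :
    x ∈ convexHull ℝ {y | ∃ I : Finset α, M.Indep I ∧ (∃ p : Fin m, I.card = c p) ∧ y = incVec I} := by
  classical
  set S : Set (α → ℝ) :=
    {y | ∃ I : Finset α, M.Indep I ∧ (∃ p : Fin m, I.card = c p) ∧ y = incVec I} with hS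
  by_contra hxH
  -- basic size facts
  have hrle : M.r Finset.univ ≤ Fintype.card α := by
    obtain ⟨I, hIs, _, hc⟩ := exists_r_attained M (Finset.univ : Finset α)
    rw [← hc]
    simpa using Finset.card_le_card hIs
  have hc0m : c ⟨0, by omega⟩ < c ⟨m - 1, by omega⟩ :=
    hmono (by rw [Fin.lt_def]; simp; omega)
  have hn : 0 < Fintype.card α := by omega
  set n := Fintype.card α with hndef
  -- separation
  have hSfin : S.Finite := by
    apply Set.Finite.subset (Set.finite_range (incVec (α := α)))
    rintro _ ⟨I, _, _, rfl⟩
    exact ⟨I, rfl⟩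
  have hclosed : IsClosed (convexHull ℝ S) := (hSfin.isCompact_convexHull (𝕜 := ℝ)).isClosed
  obtain ⟨f, u, hfu, hux⟩ :=
    geometric_hahn_banach_closed_point (convex_convexHull ℝ S) hclosed hxH
  set w : α → ℝ := fun e => f (Pi.single e 1) with hw
  have hfw : ∀ y : α → ℝ, f y = ∑ e, y e * w e := by
    intro y
    have hy : y = ∑ e, y e • (Pi.single e (1 : ℝ) : α → ℝ) := by
      have h1 : ∀ e : α, (Pi.single e (y e) : α → ℝ) = y e • (Pi.single e (1 : ℝ) : α → ℝ) := by
        intro e; funext e'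
        by_cases h : e' = e <;> simp [Pi.single_apply, h]
      calc y = ∑ e, (Pi.single e (y e) : α → ℝ) := (Finset.univ_sum_single y).symm
        _ = ∑ e, y e • (Pi.single e (1 : ℝ) : α → ℝ) := by simp_rw [h1]
    conv_lhs => rw [hy]
    rw [map_sum]
    simp [hw, smul_eq_mul]
  -- sorted enumeration
  set e0 : Fin n ≃ α := (Fintype.equivFin α).symm with he0
  set σ : Equiv.Perm (Fin n) := Tuple.sort (fun i => -(w (e0 i))) with hσ
  set εe : Fin n ≃ α := σ.trans e0 with hεe
  have hanti : ∀ i j : Fin n, i ≤ j → w (εe j) ≤ w (εe i) := by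
    intro i j hij
    have := Tuple.monotone_sort (fun i => -(w (e0 i))) hij
    simp only [Function.comp_apply] at this
    simp only [hεe, Equiv.trans_apply]
    linarith
  set U : ℕ → ℝ := fun i => w (εe ⟨min i (n-1), by omega⟩) with hU
  have hUanti : ∀ i j : ℕ, i ≤ j → U j ≤ U i := by
    intro i j hij
    exact hanti _ _ (Fin.mk_le_mk.2 (by omega))
  have hUeq : ∀ i : Fin n, U i.val = w (εe i) := by
    intro i
    simp only [hU]
    have h : (⟨min (i:ℕ) (n-1), by have := i.isLt; omega⟩ : Fin n) = i := by
      apply Fin.ext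
      show min (i:ℕ) (n-1) = (i:ℕ)
      have := i.isLt; omega
    rw [h]
  -- prefix sets
  set G : ℕ → Finset α := fun j => (Finset.univ.filter fun i : Fin n => (i : ℕ) < j).image εe
    with hG
  have hG0 : G 0 = ∅ := by simp [hG]
  have hGstep : ∀ j, (hj : j < n) → G (j+1) = insert (εe ⟨j, hj⟩) (G j) := by
    intro j hj
    simp only [hG]
    rw [show (Finset.univ.filter fun i : Fin n => (i : ℕ) < j + 1)
        = insert (⟨j, hj⟩ : Fin n) (Finset.univ.filter fun i : Fin n => (i : ℕ) < j) by
      ext i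
      simp only [Finset.mem_filter, Finset.mem_univ, true_and, Finset.mem_insert]
      constructor
      · intro h
        rcases Nat.lt_succ_iff_lt_or_eq.1 h with h | h
        · exact Or.inr h
        · exact Or.inl (Fin.ext h)
      · rintro (rfl | h)
        · exact Nat.lt_succ_self j
        · omega]
    rw [Finset.image_insert]
  have hGn : G n = Finset.univ := by
    simp only [hG]
    rw [show (Finset.univ.filter fun i : Fin n => (i : ℕ) < n) = Finset.univ by
      ext i; simp [i.isLt]]
    exact Finset.image_univ_equiv εe
  have hGne : ∀ j, (hj : j < n) → G (j+1) ≠ ∅ := by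
    intro j hj
    rw [hGstep j hj]
    exact Finset.insert_ne_empty _ _
  -- prefix sums
  have hpre : ∀ (y : α → ℝ) (j : ℕ), j ≤ n →
      ∑ i ∈ Finset.range j, (if h : i < n then y (εe ⟨i, h⟩) else 0) = fsum y (G j) := by
    intro y j
    induction j with
    | zero => intro _; simp [hG0, fsum]
    | succ j ih =>
      intro hjn
      have hj : j < n := by omega
      have hnm : εe ⟨j, hj⟩ ∉ G j := by
        simp only [hG, Finset.mem_image]
        rintro ⟨i, hi, hie⟩
        simp only [Finset.mem_filter] at hi
        have := εe.injective hie
        subst this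
        simp at hi
      rw [Finset.sum_range_succ, ih (by omega), dif_pos hj, hGstep j hj, fsum_insert hnm]
      ring
  -- master identity
  have hmaster : ∀ y : α → ℝ,
      ∑ e, y e * w e
        = (∑ j ∈ Finset.range n, (U j - U (j+1)) * fsum y (G (j+1)))
          + U n * fsum y Finset.univ := by
    intro y
    have h1 : ∑ e, y e * w e = ∑ i : Fin n, y (εe i) * w (εe i) :=
      (Equiv.sum_comp εe (fun e => y e * w e)).symm
    have h2 : ∑ i : Fin n, y (εe i) * w (εe i)
        = ∑ i ∈ Finset.range n, U i * (if h : i < n then y (εe ⟨i, h⟩) else 0) := by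
      rw [← Fin.sum_univ_eq_sum_range (fun i => U i * (if h : i < n then y (εe ⟨i, h⟩) else 0)) n]
      apply Finset.sum_congr rfl
      intro i _
      rw [dif_pos i.isLt, hUeq i, Fin.eta]
      ring
    rw [h1, h2, abel_sum]
    congr 1
    · apply Finset.sum_congr rfl
      intro j hj
      rw [Finset.mem_range] at hj
      rw [hpre y (j+1) (by omega)]
    · rw [hpre y n le_rfl, hGn]
  -- choose the interval
  set t : ℝ := fsum x Finset.univ with ht
  have hexp : ∃ p : ℕ, ∃ hp : p + 1 < m, (c ⟨p, by omega⟩ : ℝ) ≤ t ∧ t ≤ (c ⟨p+1, hp⟩ : ℝ) := by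
    by_contra hcon
    push_neg at hcon
    have hall : ∀ q, ∀ hq : q ≤ m - 1, (c ⟨q, by omega⟩ : ℝ) ≤ t := by
      intro q
      induction q with
      | zero => intro _; exact hx2
      | succ q ih =>
        intro hq
        have h1 := ih (by omega)
        have h2 := hcon q (by omega) h1
        linarith only [h2]
    have h2 := hcon (m-2) (by omega) (hall (m-2) (by omega))
    have h3 := hall (m-1) le_rfl
    have hfe : (⟨m-2+1, by omega⟩ : Fin m) = ⟨m-1, by omega⟩ := by
      apply Fin.ext
      show m-2+1 = m-1
      omega
    rw [hfe] at h2
    linarith only [h2, hx3]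
  obtain ⟨p, hp, hcp, hcp1⟩ := hexp
  set k₀ : ℕ := c ⟨p, by omega⟩ with hk₀
  set k₁ : ℕ := c ⟨p+1, hp⟩ with hk₁
  have hk01 : k₀ < k₁ := hmono (by exact Fin.mk_lt_mk.2 (Nat.lt_succ_self p))
  have hk01' : (k₀:ℝ) < k₁ := by exact_mod_cast hk01
  set lam : ℝ := (t - k₀) / (k₁ - k₀) with hlam
  have hlam0 : 0 ≤ lam := div_nonneg (by linarith only [hcp]) (by linarith only [hk01'])
  have hlam1 : lam ≤ 1 := by
    rw [hlam, div_le_one (by linarith only [hk01'])]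
    linarith only [hcp1]
  have hne : (k₁:ℝ) - k₀ ≠ 0 := sub_ne_zero.mpr (ne_of_gt hk01')
  have hteq : t = (1 - lam) * k₀ + lam * k₁ := by
    rw [hlam]
    field_simp
    ring
  have hk₁r : k₁ ≤ M.r Finset.univ := by
    refine le_trans ?_ hlast
    exact hmono.monotone (Fin.mk_le_mk.2 (by omega))
  have hk₀r : k₀ ≤ M.r Finset.univ := le_trans (le_of_lt hk01) hk₁r
  have hGstep' : ∀ j < n, ∃ e, G (j+1) = insert e (G j) := fun j hj => ⟨_, hGstep j hj⟩
  obtain ⟨I₀, hI₀ind, hI₀card, hI₀int⟩ := chain_greedy M n G hG0 hGstep' hGn k₀ hk₀r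
  obtain ⟨I₁, hI₁ind, hI₁card, hI₁int⟩ := chain_greedy M n G hG0 hGstep' hGn k₁ hk₁r
  have hI₀S : incVec I₀ ∈ S := ⟨I₀, hI₀ind, ⟨⟨p, by omega⟩, hI₀card⟩, rfl⟩
  have hI₁S : incVec I₁ ∈ S := ⟨I₁, hI₁ind, ⟨⟨p+1, hp⟩, hI₁card⟩, rfl⟩
  -- the pointwise bound
  have hbound : ∀ j < n, fsum x (G (j+1)) ≤
      (1 - lam) * fsum (incVec I₀) (G (j+1)) + lam * fsum (incVec I₁) (G (j+1)) := by
    intro j hj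
    have h0 : fsum (incVec I₀) (G (j+1)) = ((min (M.r (G (j+1))) k₀ : ℕ) : ℝ) := by
      rw [fsum_incVec, hI₀int (j+1) (by omega)]
    have h1 : fsum (incVec I₁) (G (j+1)) = ((min (M.r (G (j+1))) k₁ : ℕ) : ℝ) := by
      rw [fsum_incVec, hI₁int (j+1) (by omega)]
    rcases le_or_gt (M.r (G (j+1))) k₀ with hle | hgt
    · have e0 : min (M.r (G (j+1))) k₀ = M.r (G (j+1)) := min_eq_left hle
      have e1 : min (M.r (G (j+1))) k₁ = M.r (G (j+1)) := min_eq_left (by omega)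
      rw [h0, h1, e0, e1]
      exact arith_case1 (hx4 (G (j+1)) (hGne j hj))
    · rcases lt_or_ge (M.r (G (j+1))) k₁ with hmid | hge
      · have e0 : min (M.r (G (j+1))) k₀ = k₀ := min_eq_right (by omega)
        have e1 : min (M.r (G (j+1))) k₁ = M.r (G (j+1)) := min_eq_left (by omega)
        have hforb : ((k₁:ℝ) - (M.r (G (j+1)) : ℝ)) * fsum x (G (j+1))
            - ((M.r (G (j+1)) : ℝ) - (k₀:ℝ)) * fsum x (G (j+1))ᶜ
            ≤ (k₀:ℝ) * ((k₁:ℝ) - (M.r (G (j+1)) : ℝ)) :=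
          hx1 (G (j+1)) ⟨p, by omega⟩ hp hgt hmid
        rw [fsum_compl, ← ht] at hforb
        rw [h0, h1, e0, e1]
        exact arith_case2 hk01' hforb hteq
      · have e0 : min (M.r (G (j+1))) k₀ = k₀ := min_eq_right (by omega)
        have e1 : min (M.r (G (j+1))) k₁ = k₁ := min_eq_right hge
        rw [h0, h1, e0, e1]
        have hsub : fsum x (G (j+1)) ≤ t := by
          rw [ht]
          exact fsum_le_of_nonneg hx5 (Finset.subset_univ _)
        exact arith_case3 hsub hteq
  -- main estimate
  have hMain : f x ≤ (1 - lam) * f (incVec I₀) + lam * f (incVec I₁) := by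
    rw [hfw x, hfw (incVec I₀), hfw (incVec I₁), hmaster x, hmaster (incVec I₀),
      hmaster (incVec I₁)]
    have hsum : ∑ j ∈ Finset.range n, (U j - U (j+1)) * fsum x (G (j+1))
        ≤ ∑ j ∈ Finset.range n, (U j - U (j+1)) *
          ((1-lam) * fsum (incVec I₀) (G (j+1)) + lam * fsum (incVec I₁) (G (j+1))) := by
      apply Finset.sum_le_sum
      intro j hj
      rw [Finset.mem_range] at hj
      exact mul_le_mul_of_nonneg_left (hbound j hj)
        (by linarith only [hUanti j (j+1) (by omega)])
    have hsplit : ∑ j ∈ Finset.range n, (U j - U (j+1)) *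
          ((1-lam) * fsum (incVec I₀) (G (j+1)) + lam * fsum (incVec I₁) (G (j+1)))
        = (1-lam) * ∑ j ∈ Finset.range n, (U j - U (j+1)) * fsum (incVec I₀) (G (j+1))
          + lam * ∑ j ∈ Finset.range n, (U j - U (j+1)) * fsum (incVec I₁) (G (j+1)) := by
      rw [Finset.mul_sum, Finset.mul_sum, ← Finset.sum_add_distrib]
      apply Finset.sum_congr rfl
      intros
      ring
    have hUt : U n * fsum x Finset.univ
        = (1-lam) * (U n * fsum (incVec I₀) Finset.univ)
          + lam * (U n * fsum (incVec I₁) Finset.univ) := by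
      rw [fsum_incVec_univ, fsum_incVec_univ, hI₀card, hI₁card, ← ht, hteq]
      ring
    rw [← ht]
    rw [← ht] at hUt
    linarith only [hsum, hsplit, hUt]
  have hfI₀ : f (incVec I₀) < u := hfu _ (subset_convexHull ℝ S hI₀S)
  have hfI₁ : f (incVec I₁) < u := hfu _ (subset_convexHull ℝ S hI₁S)
  have hcontr : f x ≤ u := by
    calc f x ≤ (1-lam) * f (incVec I₀) + lam * f (incVec I₁) := hMain
      _ ≤ (1-lam) * u + lam * u :=
        add_le_add (mul_le_mul_of_nonneg_left hfI₀.le (by linarith only [hlam1]))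
          (mul_le_mul_of_nonneg_left hfI₁.le hlam0)
      _ = u := by ring
  linarith only [hcontr, hux]


set_option maxHeartbeats 2000000

/-- complete linear description of the cardinality constrained
matroid polytope. -/
theorem cardPolytope_eq_linear_system {α : Type*} [Fintype α] [DecidableEq α]
    (M : FinMatroid α)
    {m : ℕ} (c : Fin m → ℕ) (hm : 2 ≤ m) (hmono : StrictMono c)
    (hlast : c ⟨m - 1, by omega⟩ ≤ M.r Finset.univ) :
    cardPolytope M c =
      {x : α → ℝ |
        (∀ (F : Finset α) (p : Fin m) (hp : p.val + 1 < m),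
          c p < M.r F → M.r F < c ⟨p.val + 1, hp⟩ → ((c ⟨p.val + 1, hp⟩ : ℝ) - M.r F) * fsum x F - ((M.r F : ℝ) - c p) * fsum x Fᶜ ≤ (c p : ℝ) * ((c ⟨p.val + 1, hp⟩ : ℝ) - M.r F)) ∧
        (c ⟨0, by omega⟩ : ℝ) ≤ fsum x Finset.univ ∧
        fsum x Finset.univ ≤ (c ⟨m - 1, by omega⟩ : ℝ) ∧
        (∀ F : Finset α, F ≠ ∅ → fsum x F ≤ (M.r F : ℝ)) ∧
        (∀ e : α, 0 ≤ x e)} := by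
  classical
  unfold cardPolytope
  set S : Set (α → ℝ) :=
    {x | ∃ I : Finset α, M.Indep I ∧ (∃ p : Fin m, I.card = c p) ∧ x = incVec I} with hS
  set Q : Set (α → ℝ) :=
    {x : α → ℝ |
        (∀ (F : Finset α) (p : Fin m) (hp : p.val + 1 < m),
          c p < M.r F → M.r F < c ⟨p.val + 1, hp⟩ → ((c ⟨p.val + 1, hp⟩ : ℝ) - M.r F) * fsum x F - ((M.r F : ℝ) - c p) * fsum x Fᶜ ≤ (c p : ℝ) * ((c ⟨p.val + 1, hp⟩ : ℝ) - M.r F)) ∧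
        (c ⟨0, by omega⟩ : ℝ) ≤ fsum x Finset.univ ∧
        fsum x Finset.univ ≤ (c ⟨m - 1, by omega⟩ : ℝ) ∧
        (∀ F : Finset α, F ≠ ∅ → fsum x F ≤ (M.r F : ℝ)) ∧
        (∀ e : α, 0 ≤ x e)} with hQ
  have hSQ : S ⊆ Q := by
    rintro _ ⟨I, hI, ⟨q, hq⟩, rfl⟩
    refine ⟨fun F p hp h1 h2 => gen_forbidden M c hmono hI q hq F p hp h1 h2, ?_, ?_, ?_, ?_⟩
    · rw [fsum_incVec_univ, hq]
      exact_mod_cast hmono.monotone (show (⟨0, by omega⟩ : Fin m) ≤ q by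
        simp [Fin.le_def])
    · rw [fsum_incVec_univ, hq]
      exact_mod_cast hmono.monotone (show q ≤ (⟨m - 1, by omega⟩ : Fin m) by
        simp only [Fin.le_def]
        have := q.isLt
        omega)
    · intro F _
      rw [fsum_incVec]
      exact_mod_cast card_le_r M (M.subset_indep hI Finset.inter_subset_left)
        Finset.inter_subset_right
    · intro e
      simp only [incVec]
      split <;> norm_num
  have hQconv : Convex ℝ Q := by
    rintro x hx y hy a b ha hb hab
    obtain ⟨hx1, hx2, hx3, hx4, hx5⟩ := hx
    obtain ⟨hy1, hy2, hy3, hy4, hy5⟩ := hy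
    have hb' : b = 1 - a := by linarith
    subst hb'
    refine ⟨?_, ?_, ?_, ?_, ?_⟩
    · intro F p hp h1 h2
      have e1 := hx1 F p hp h1 h2
      have e2 := hy1 F p hp h1 h2
      rw [fsum_comb, fsum_comb]
      nlinarith [mul_le_mul_of_nonneg_left e1 ha, mul_le_mul_of_nonneg_left e2 hb]
    · rw [fsum_comb]
      nlinarith [mul_le_mul_of_nonneg_left hx2 ha, mul_le_mul_of_nonneg_left hy2 hb]
    · rw [fsum_comb]
      nlinarith [mul_le_mul_of_nonneg_left hx3 ha, mul_le_mul_of_nonneg_left hy3 hb]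
    · intro F hF
      rw [fsum_comb]
      nlinarith [mul_le_mul_of_nonneg_left (hx4 F hF) ha, mul_le_mul_of_nonneg_left (hy4 F hF) hb]
    · intro e
      simp only [Pi.add_apply, Pi.smul_apply, smul_eq_mul]
      nlinarith [mul_nonneg ha (hx5 e), mul_nonneg hb (hy5 e)]
  refine Set.Subset.antisymm (convexHull_min hSQ hQconv) ?_
  intro x hx
  exact mem_hull_of_system M c hm hmono hlast x hx.1 hx.2.1 hx.2.2.1 hx.2.2.2.1 hx.2.2.2.2
end

section
/- Let k be a natural number with 0 < k ≤ r(E) and let ∅ ≠ F ⊆ E. Consider the family T of independent sets I of M with |I| = k that satisfy the inequality x(F) ≥ r^k(F) at equality, i.e., |I ∩ F| = r^k(F). Then the restrictions to the coordinates in F of the incidence vectors {χ^I : I ∈ T} span the full space ℝ^F (equivalently, the matrix A_F whose rows are these restrictions has rank |F|) if and only if r^k(F) ≥ 1, E∖F is closed, and (F is k-inseparable or k < r(E)). -/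
open Finset

variable {α : Type*} [Fintype α] [DecidableEq α]

namespace FinMatroid
variable {M : FinMatroid α} {A B I J : Finset α} {e f : α}

open Classical in
lemma card_le_r (hI : M.Indep I) (hIA : I ⊆ A) : I.card ≤ M.r A :=
  Finset.le_sup (by simp [Finset.mem_filter, Finset.mem_powerset, hI, hIA])

open Classical in
lemma exists_basis (M : FinMatroid α) (A : Finset α) :
    ∃ B, B ⊆ A ∧ M.Indep B ∧ B.card = M.r A := by
  classical
  have hne : (A.powerset.filter M.Indep).Nonempty :=
    ⟨∅, by simp [Finset.mem_filter, M.empty_indep]⟩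
  obtain ⟨B, hB, hBc⟩ := Finset.exists_mem_eq_sup _ hne Finset.card
  simp only [Finset.mem_filter, Finset.mem_powerset] at hB
  exact ⟨B, hB.1, hB.2, hBc.symm⟩

lemma r_mono (h : A ⊆ B) : M.r A ≤ M.r B := by
  obtain ⟨C, hCA, hCi, hCc⟩ := M.exists_basis A
  exact hCc ▸ card_le_r hCi (hCA.trans h)

lemma r_le_card (M : FinMatroid α) (A : Finset α) : M.r A ≤ A.card := by
  obtain ⟨C, hCA, _, hCc⟩ := M.exists_basis A
  exact hCc ▸ Finset.card_le_card hCA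

lemma indep_r (hI : M.Indep I) : M.r I = I.card :=
  le_antisymm (M.r_le_card I) (card_le_r hI subset_rfl)

lemma indep_of_r_eq_card (h : M.r A = A.card) : M.Indep A := by
  obtain ⟨C, hCA, hCi, hCc⟩ := M.exists_basis A
  have : C = A := Finset.eq_of_subset_of_card_le hCA (by omega)
  exact this ▸ hCi

lemma extend (hI : M.Indep I) (hIA : I ⊆ A) (h : I.card < M.r A) :
    ∃ e ∈ A, e ∉ I ∧ M.Indep (insert e I) := by
  obtain ⟨C, hCA, hCi, hCc⟩ := M.exists_basis A
  obtain ⟨e, he, hei⟩ := M.exchange hI hCi (by omega)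
  rw [Finset.mem_sdiff] at he
  exact ⟨e, hCA he.1, he.2, hei⟩

lemma extend_to (hI : M.Indep I) (hIA : I ⊆ A) {n : ℕ} (h1 : I.card ≤ n) (h2 : n ≤ M.r A) :
    ∃ J, I ⊆ J ∧ J ⊆ A ∧ M.Indep J ∧ J.card = n := by
  obtain ⟨d, hd⟩ : ∃ d, n - I.card = d := ⟨_, rfl⟩
  induction d generalizing I with
  | zero => exact ⟨I, subset_rfl, hIA, hI, by omega⟩
  | succ d ih =>
    obtain ⟨e, heA, heI, hei⟩ := extend hI hIA (by omega)
    obtain ⟨J, hJ1, hJ2, hJ3, hJ4⟩ := ih hei (Finset.insert_subset heA hIA)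
      (by rw [Finset.card_insert_of_notMem heI]; omega)
      (by rw [Finset.card_insert_of_notMem heI]; omega)
    exact ⟨J, (Finset.subset_insert _ _).trans hJ1, hJ2, hJ3, hJ4⟩

lemma exists_basis_superset (hI : M.Indep I) (hIA : I ⊆ A) :
    ∃ J, I ⊆ J ∧ J ⊆ A ∧ M.Indep J ∧ J.card = M.r A :=
  extend_to hI hIA (card_le_r hI hIA) le_rfl

lemma r_insert_le (M : FinMatroid α) (A : Finset α) (e : α) :
    M.r (insert e A) ≤ M.r A + 1 := by
  obtain ⟨C, hCA, hCi, hCc⟩ := M.exists_basis (insert e A)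
  have h1 : M.Indep (C.erase e) := M.subset_indep hCi (Finset.erase_subset _ _)
  have h2 : C.erase e ⊆ A := by
    intro x hx
    rw [Finset.mem_erase] at hx
    rcases Finset.mem_insert.1 (hCA hx.2) with h | h
    · exact absurd h hx.1
    · exact h
  have := card_le_r h1 h2
  have := Finset.pred_card_le_card_erase (s := C) (a := e)
  omega

lemma submod (M : FinMatroid α) (A B : Finset α) :
    M.r (A ∪ B) + M.r (A ∩ B) ≤ M.r A + M.r B := by
  obtain ⟨X, hX1, hX2, hX3⟩ := M.exists_basis (A ∩ B)
  obtain ⟨Y, hY0, hY1, hY2, hY3⟩ := exists_basis_superset hX2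
    (hX1.trans (Finset.inter_subset_union))
  have hYA : (Y ∩ A).card ≤ M.r A := card_le_r (M.subset_indep hY2 Finset.inter_subset_left)
    Finset.inter_subset_right
  have hYB : (Y ∩ B).card ≤ M.r B := card_le_r (M.subset_indep hY2 Finset.inter_subset_left)
    Finset.inter_subset_right
  have hkey : (Y ∩ A).card + (Y ∩ B).card = Y.card + (Y ∩ (A ∩ B)).card := by
    have h1 : (Y ∩ A) ∪ (Y ∩ B) = Y := by
      rw [← Finset.inter_union_distrib_left, Finset.inter_eq_left.2 hY1]
    have h2 : (Y ∩ A) ∩ (Y ∩ B) = Y ∩ (A ∩ B) := by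
      ext x; simp [Finset.mem_inter]; tauto
    have := Finset.card_inter_add_card_union (Y ∩ A) (Y ∩ B)
    rw [h1, h2] at this
    omega
  have hXY : X ⊆ Y ∩ (A ∩ B) := Finset.subset_inter hY0 hX1
  have := Finset.card_le_card hXY
  omega
end FinMatroid
namespace FinMatroid
variable {α : Type*} [Fintype α] [DecidableEq α]
variable {M : FinMatroid α} {A B I J F S X Y Z : Finset α} {e f : α}

lemma absorb (h : M.r (insert e A) = M.r A) (hAB : A ⊆ B) :
    M.r (insert e B) = M.r B := by
  have h1 := M.submod (insert e A) B
  have h2 : insert e A ∪ B = insert e B := by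
    rw [Finset.insert_union, Finset.union_eq_right.2 hAB]
  have h3 : A ⊆ insert e A ∩ B :=
    Finset.subset_inter (Finset.subset_insert _ _) hAB
  have h4 := r_mono (M := M) h3
  have h5 := r_mono (M := M) (Finset.subset_insert e B)
  rw [h2] at h1
  omega

lemma absorb_set (h : ∀ f ∈ Z, M.r (insert f A) = M.r A) : M.r (A ∪ Z) = M.r A := by
  classical
  induction Z using Finset.induction with
  | empty => simp
  | @insert g Z' hg ih =>
    rw [Finset.union_insert, absorb (h g (Finset.mem_insert_self _ _)) Finset.subset_union_left,
      ih fun f hf => h f (Finset.mem_insert_of_mem hf)]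

lemma dep_insert_r (hY : M.Indep Y) (hdep : ¬ M.Indep (insert e Y)) :
    M.r (insert e Y) = M.r Y := by
  have heY : e ∉ Y := fun h => hdep (by rwa [Finset.insert_eq_self.2 h])
  have h1 : M.r (insert e Y) ≤ Y.card := by
    by_contra h
    push_neg at h
    obtain ⟨C, hC1, hC2, hC3⟩ := M.exists_basis (insert e Y)
    have : insert e Y = C := (Finset.eq_of_subset_of_card_le hC1 (by
      rw [Finset.card_insert_of_notMem heY]; omega)).symm
    exact hdep (this ▸ hC2)
  have h2 := r_mono (M := M) (Finset.subset_insert e Y)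
  rw [indep_r hY] at h2 ⊢
  omega

/-- If `B` is a basis of `Fᶜ` and `Fᶜ` is closed, then `B + e` is independent for `e ∈ F`. -/
lemma closed_insert_indep (hcl : M.ClosedSet Fᶜ) (hB1 : B ⊆ Fᶜ) (hB2 : M.Indep B)
    (hB3 : B.card = M.r Fᶜ) (he : e ∈ F) : M.Indep (insert e B) := by
  have he' : e ∉ Fᶜ := by simp [Finset.mem_compl, he]
  have h1 : M.r Fᶜ < M.r (insert e Fᶜ) := hcl e he'
  obtain ⟨C, hC1, hC2, hC3⟩ := M.exists_basis (insert e Fᶜ)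
  obtain ⟨x, hx, hxi⟩ := M.exchange hB2 hC2 (by omega)
  rw [Finset.mem_sdiff] at hx
  rcases Finset.mem_insert.1 (hC1 hx.1) with h | h
  · exact h ▸ hxi
  · exfalso
    have := card_le_r hxi (Finset.insert_subset h hB1)
    rw [Finset.card_insert_of_notMem hx.2] at this
    omega

/-- an independent superset of a basis of `Fᶜ` meets `Fᶜ` exactly in that basis -/
lemma inter_compl_eq_basis (hI : M.Indep I) (hB1 : B ⊆ Fᶜ) (hB3 : B.card = M.r Fᶜ)
    (hBI : B ⊆ I) : I ∩ Fᶜ = B := by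
  refine (Finset.eq_of_subset_of_card_le (Finset.subset_inter hBI hB1) ?_).symm
  calc (I ∩ Fᶜ).card ≤ M.r Fᶜ := card_le_r (M.subset_indep hI Finset.inter_subset_left)
        Finset.inter_subset_right
    _ = B.card := hB3.symm

end FinMatroid
namespace FinMatroid
variable {α : Type*} [Fintype α] [DecidableEq α]
variable {M : FinMatroid α} {A B I J F S X Y Z : Finset α} {e f : α} {k : ℕ} {a : α → ℝ}

lemma card_inter_compl (J F : Finset α) : (J ∩ F).card + (J ∩ Fᶜ).card = J.card := by
  classical
  rw [← Finset.card_union_of_disjoint, ← Finset.inter_union_distrib_left,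
    Finset.union_compl, Finset.inter_univ]
  exact Finset.disjoint_left.2 fun x hx hx' => by
    simp only [Finset.mem_inter, Finset.mem_compl] at hx hx'
    exact hx'.2 hx.2

lemma erase_inter_compl (he : e ∈ F) : (J.erase e) ∩ Fᶜ = J ∩ Fᶜ := by
  ext x
  simp only [Finset.mem_inter, Finset.mem_erase, Finset.mem_compl]
  exact ⟨fun h => ⟨h.1.2, h.2⟩, fun h => ⟨⟨fun hx => h.2 (hx ▸ he), h.1⟩, h.2⟩⟩

lemma insert_inter_compl (he : e ∈ F) : (insert e J) ∩ Fᶜ = J ∩ Fᶜ := by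
  ext x
  simp only [Finset.mem_inter, Finset.mem_insert, Finset.mem_compl]
  constructor
  · rintro ⟨h | h, h2⟩
    · exact absurd (h ▸ he) h2
    · exact ⟨h, h2⟩
  · exact fun h => ⟨Or.inr h.1, h.2⟩

lemma union_inter_compl_left (hB : B ⊆ Fᶜ) (hS : S ⊆ F) : (B ∪ S) ∩ Fᶜ = B := by
  ext x
  simp only [Finset.mem_inter, Finset.mem_union, Finset.mem_compl]
  constructor
  · rintro ⟨h | h, h2⟩
    · exact h
    · exact absurd (hS h) h2
  · exact fun h => ⟨Or.inl h, by simpa using hB h⟩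

lemma union_inter_F (hB : B ⊆ Fᶜ) (hS : S ⊆ F) : (B ∪ S) ∩ F = S := by
  ext x
  simp only [Finset.mem_inter, Finset.mem_union]
  constructor
  · rintro ⟨h | h, h2⟩
    · exact absurd h2 (by simpa using hB h)
    · exact h
  · exact fun h => ⟨Or.inr h, hS h⟩

lemma card_union_basis (hB : B ⊆ Fᶜ) (hS : S ⊆ F) : (B ∪ S).card = B.card + S.card := by
  rw [Finset.card_union_of_disjoint]
  exact Finset.disjoint_left.2 fun x hx hx' => by
    have := hB hx; simp only [Finset.mem_compl] at this; exact this (hS hx')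

/-- the sum identity for a single exchange -/
lemma sum_exchange_eq (he : e ∈ S) (hf : f ∉ S)
    (h1 : ∑ x ∈ S, a x = 0) (h2 : ∑ x ∈ insert f (S.erase e), a x = 0) : a f = a e := by
  rw [Finset.sum_insert (fun h => hf (Finset.erase_subset _ _ h))] at h2
  have h3 := Finset.sum_erase_add S a he
  linarith

/-- Case A: `k < r(univ)`: all values of `a` on `F` agree. -/
lemma constA (hm1 : M.r Fᶜ + 1 ≤ k) (hkr : k < M.r Finset.univ) (hcl : M.ClosedSet Fᶜ)
    (H : ∀ I, M.Indep I → I.card = k → (I ∩ Fᶜ).card = M.r Fᶜ → ∑ x ∈ I ∩ F, a x = 0)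
    (he : e ∈ F) (hf : f ∈ F) : a e = a f := by
  classical
  rcases eq_or_ne e f with rfl | hef
  · rfl
  obtain ⟨B, hB1, hB2, hB3⟩ := M.exists_basis Fᶜ
  have heB : e ∉ B := fun h => by simpa [he] using hB1 h
  have hfB : f ∉ B := fun h => by simpa [hf] using hB1 h
  have hBe : M.Indep (insert e B) := closed_insert_indep hcl hB1 hB2 hB3 he
  have hBf : M.Indep (insert f B) := closed_insert_indep hcl hB1 hB2 hB3 hf
  by_cases hind : M.Indep (insert f (insert e B))
  · -- extend to size k+1
    have hcard : (insert f (insert e B)).card = M.r Fᶜ + 2 := by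
      rw [Finset.card_insert_of_notMem (by simp [hef.symm, hfB]),
        Finset.card_insert_of_notMem heB, hB3]
    obtain ⟨J, hJ1, _, hJ3, hJ4⟩ := extend_to hind (Finset.subset_univ _)
      (n := k + 1) (by omega) (by omega)
    have hBJ : B ⊆ J := ((Finset.subset_insert _ _).trans (Finset.subset_insert _ _)).trans hJ1
    have hJB : J ∩ Fᶜ = B := inter_compl_eq_basis hJ3 hB1 hB3 hBJ
    have heS : e ∈ J ∩ F := Finset.mem_inter.2 ⟨hJ1 (by simp), he⟩
    have hfS : f ∈ J ∩ F := Finset.mem_inter.2 ⟨hJ1 (by simp), hf⟩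
    have key : ∀ x ∈ J ∩ F, ∑ y ∈ (J ∩ F).erase x, a y = 0 := by
      intro x hx
      have hxF : x ∈ F := (Finset.mem_inter.1 hx).2
      have hxJ : x ∈ J := (Finset.mem_inter.1 hx).1
      have h1 : M.Indep (J.erase x) := M.subset_indep hJ3 (Finset.erase_subset _ _)
      have h2 : (J.erase x).card = k := by
        rw [Finset.card_erase_of_mem hxJ, hJ4]
        omega
      have h3 : (J.erase x) ∩ Fᶜ = B := by rw [erase_inter_compl hxF, hJB]
      have := H _ h1 h2 (by rw [h3, hB3])
      rwa [Finset.erase_inter] at this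
    have h1 := key e heS
    have h2 := key f hfS
    have h3 := Finset.sum_erase_add (J ∩ F) a heS
    have h4 := Finset.sum_erase_add (J ∩ F) a hfS
    linarith
  · -- parallel case
    have hrf : k ≤ M.r (Finset.univ.erase f) := by
      have h1 := M.r_insert_le (Finset.univ.erase f) f
      rw [Finset.insert_erase (Finset.mem_univ f)] at h1
      omega
    have hsub : insert e B ⊆ Finset.univ.erase f := by
      intro x hx
      rcases Finset.mem_insert.1 hx with rfl | hx
      · exact Finset.mem_erase.2 ⟨hef, Finset.mem_univ _⟩
      · exact Finset.mem_erase.2 ⟨fun h => hfB (h ▸ hx), Finset.mem_univ _⟩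
    obtain ⟨J, hJ1, hJ2, hJ3, hJ4⟩ := extend_to hBe hsub
      (n := k) (by rw [Finset.card_insert_of_notMem heB, hB3]; omega) hrf
    have hBJ : B ⊆ J := (Finset.subset_insert _ _).trans hJ1
    have hJB : J ∩ Fᶜ = B := inter_compl_eq_basis hJ3 hB1 hB3 hBJ
    have heJ : e ∈ J := hJ1 (by simp)
    have heS : e ∈ J ∩ F := Finset.mem_inter.2 ⟨heJ, he⟩
    have hfJ : f ∉ J := fun h => by simpa using (Finset.mem_erase.1 (hJ2 h)).1
    have hfS : f ∉ J ∩ F := fun h => hfJ (Finset.mem_inter.1 h).1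
    have hJe : M.Indep (J.erase e) := M.subset_indep hJ3 (Finset.erase_subset _ _)
    have hJ'ind : M.Indep (insert f (J.erase e)) := by
      by_contra hdep
      have hr1 : M.r (insert f (J.erase e)) = M.r (J.erase e) := dep_insert_r hJe hdep
      have hr2 : M.r (J.erase e) = k - 1 := by
        rw [indep_r hJe, Finset.card_erase_of_mem heJ, hJ4]
      have hr3 : M.r (insert e (insert f B)) = M.r (insert f B) := by
        refine dep_insert_r hBf (fun h => hind ?_)
        rwa [Finset.insert_comm] at h
      have hsub2 : insert f B ⊆ insert f (J.erase e) :=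
        Finset.insert_subset_insert _ (fun x hx => Finset.mem_erase.2
          ⟨fun h => heB (h ▸ hx), hBJ hx⟩)
      have hr4 : M.r (insert e (insert f (J.erase e))) = M.r (insert f (J.erase e)) :=
        absorb hr3 hsub2
      have hJsub : J ⊆ insert e (insert f (J.erase e)) := by
        intro x hx
        rcases eq_or_ne x e with rfl | hxe
        · simp
        · exact Finset.mem_insert_of_mem (Finset.mem_insert_of_mem
            (Finset.mem_erase.2 ⟨hxe, hx⟩))
      have h5 := r_mono (M := M) hJsub
      rw [indep_r hJ3, hJ4] at h5
      have h6 := M.r_le_card (J.erase e)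
      rw [Finset.card_erase_of_mem heJ, hJ4] at h6
      omega
    have hs1 : ∑ x ∈ J ∩ F, a x = 0 := H J hJ3 hJ4 (by rw [hJB, hB3])
    have hJ'card : (insert f (J.erase e)).card = k := by
      rw [Finset.card_insert_of_notMem (fun h => hfJ (Finset.erase_subset _ _ h)),
        Finset.card_erase_of_mem heJ, hJ4]
      omega
    have hJ'B : (insert f (J.erase e)) ∩ Fᶜ = B := by
      rw [insert_inter_compl hf, erase_inter_compl he, hJB]
    have hJ'F : (insert f (J.erase e)) ∩ F = insert f ((J ∩ F).erase e) := by
      rw [Finset.insert_inter_of_mem hf, Finset.erase_inter]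
    have hs2 : ∑ x ∈ insert f ((J ∩ F).erase e), a x = 0 := by
      have := H _ hJ'ind hJ'card (by rw [hJ'B, hB3])
      rwa [hJ'F] at this
    exact (sum_exchange_eq heS hfS hs1 hs2).symm

end FinMatroid
namespace FinMatroid
variable {α : Type*} [Fintype α] [DecidableEq α]
variable {M : FinMatroid α} {A B I J F G S X Y Z : Finset α} {e f : α} {k : ℕ} {a : α → ℝ}

/-- C0: at `k = r(univ)`, for a tight `I` and a level-closed `G ⊆ F`, no element of
`G` outside `I` can be added independently to `(I ∩ Fᶜ) ∪ (I ∩ G)`. -/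
lemma no_indep_insert (hk : k = M.r Finset.univ) (hG : G ⊆ F)
    (hGlev : ∀ g ∈ G, ∀ h ∈ F, a h = a g → h ∈ G)
    (H : ∀ I, M.Indep I → I.card = k → (I ∩ Fᶜ).card = M.r Fᶜ → ∑ x ∈ I ∩ F, a x = 0)
    (hI1 : M.Indep I) (hI2 : I.card = k) (hI3 : (I ∩ Fᶜ).card = M.r Fᶜ)
    (hfG : f ∈ G) (hfI : f ∉ I) :
    ¬ M.Indep (insert f ((I ∩ Fᶜ) ∪ (I ∩ G))) := by
  classical
  intro hind
  have hfF : f ∈ F := hG hfG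
  set W := insert f ((I ∩ Fᶜ) ∪ (I ∩ G)) with hW
  have hWI : W ⊆ insert f I := by
    rw [hW]
    refine Finset.insert_subset_insert _ (Finset.union_subset Finset.inter_subset_left
      Finset.inter_subset_left)
  have hrI : M.r (insert f I) = k := by
    have h1 : M.r (insert f I) ≤ M.r Finset.univ := r_mono (Finset.subset_univ _)
    have h2 : k ≤ M.r (insert f I) := by
      have := card_le_r hI1 (Finset.subset_insert f I)
      omega
    omega
  obtain ⟨J, hJ1, hJ2, hJ3, hJ4⟩ := extend_to hind hWI
    (n := k) (by have := card_le_r hind hWI; omega) (by omega)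
  have hfJ : f ∈ J := hJ1 (by rw [hW]; simp)
  have hk1 : 1 ≤ k := hJ4 ▸ Finset.card_pos.2 ⟨f, hfJ⟩
  -- J = insert f (I.erase e) for the unique e ∈ I \ J
  have hIJcard : (I \ J).card = 1 := by
    have h1 : J.erase f ⊆ I := by
      intro x hx
      rcases Finset.mem_insert.1 (hJ2 (Finset.mem_erase.1 hx).2) with h | h
      · exact absurd h (Finset.mem_erase.1 hx).1
      · exact h
    have h2 : (J.erase f).card = k - 1 := by
      rw [Finset.card_erase_of_mem hfJ, hJ4]
    have h3 : I \ J = I \ (J.erase f) := by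
      ext x
      simp only [Finset.mem_sdiff, Finset.mem_erase]
      constructor
      · exact fun hx => ⟨hx.1, fun h => hx.2 h.2⟩
      · rintro ⟨hx1, hx2⟩
        exact ⟨hx1, fun h => hx2 ⟨fun hxf => hfI (hxf ▸ hx1), h⟩⟩
    have h4 : I ∩ J.erase f = J.erase f := Finset.inter_eq_right.2 h1
    have h5 := Finset.card_sdiff_add_card_inter I (J.erase f)
    rw [h4, h2, hI2] at h5
    rw [h3]
    omega
  obtain ⟨e, he⟩ := Finset.card_eq_one.1 hIJcard
  have heI : e ∈ I := (Finset.mem_sdiff.1 (he ▸ Finset.mem_singleton_self e)).1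
  have heJ : e ∉ J := (Finset.mem_sdiff.1 (he ▸ Finset.mem_singleton_self e)).2
  have hJeq : J = insert f (I.erase e) := by
    apply Finset.eq_of_subset_of_card_le
    · intro x hx
      rcases Finset.mem_insert.1 (hJ2 hx) with h | h
      · exact h ▸ Finset.mem_insert_self _ _
      · refine Finset.mem_insert_of_mem (Finset.mem_erase.2 ⟨?_, h⟩)
        intro hxe
        exact heJ (hxe ▸ hx)
    · rw [Finset.card_insert_of_notMem (fun h => hfI (Finset.erase_subset _ _ h)),
        Finset.card_erase_of_mem heI, hI2, hJ4]
      omega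
  -- e is in F but not in G
  have heW : e ∉ W := fun h => heJ (hJ1 h)
  have heF : e ∈ F := by
    by_contra h
    exact heW (by rw [hW]; exact Finset.mem_insert_of_mem (Finset.mem_union_left _
      (Finset.mem_inter.2 ⟨heI, Finset.mem_compl.2 h⟩)))
  have heG : e ∉ G := fun h => heW (by
    rw [hW]; exact Finset.mem_insert_of_mem (Finset.mem_union_right _
      (Finset.mem_inter.2 ⟨heI, h⟩)))
  -- J is tight
  have hJB : J ∩ Fᶜ = I ∩ Fᶜ := by
    rw [hJeq, insert_inter_compl hfF, erase_inter_compl heF]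
  have hJF : J ∩ F = insert f ((I ∩ F).erase e) := by
    rw [hJeq, Finset.insert_inter_of_mem hfF, Finset.erase_inter]
  have hs1 := H I hI1 hI2 hI3
  have hs2 : ∑ x ∈ insert f ((I ∩ F).erase e), a x = 0 := by
    have := H J hJ3 hJ4 (by rw [hJB]; exact hI3)
    rwa [hJF] at this
  have heIF : e ∈ I ∩ F := Finset.mem_inter.2 ⟨heI, heF⟩
  have hfIF : f ∉ I ∩ F := fun h => hfI (Finset.mem_inter.1 h).1
  have : a f = a e := sum_exchange_eq heIF hfIF hs1 hs2
  exact heG (hGlev f hfG e heF this.symm)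

/-- C1: rank formula for `Fᶜ ∪ G`. -/
lemma rank_compl_union (hk : k = M.r Finset.univ) (hG : G ⊆ F)
    (hGlev : ∀ g ∈ G, ∀ h ∈ F, a h = a g → h ∈ G)
    (H : ∀ I, M.Indep I → I.card = k → (I ∩ Fᶜ).card = M.r Fᶜ → ∑ x ∈ I ∩ F, a x = 0)
    (hI1 : M.Indep I) (hI2 : I.card = k) (hI3 : (I ∩ Fᶜ).card = M.r Fᶜ) :
    M.r (Fᶜ ∪ G) = M.r Fᶜ + (I ∩ G).card := by
  classical
  set Y := (I ∩ Fᶜ) ∪ (I ∩ G) with hY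
  have hYind : M.Indep Y := M.subset_indep hI1 (Finset.union_subset Finset.inter_subset_left
    Finset.inter_subset_left)
  have hYcard : Y.card = M.r Fᶜ + (I ∩ G).card := by
    rw [hY, Finset.card_union_of_disjoint, hI3]
    exact Finset.disjoint_left.2 fun x hx hx' => by
      have h1 := Finset.mem_compl.1 (Finset.mem_inter.1 hx).2
      exact h1 (hG (Finset.mem_inter.1 hx').2)
  have hYsub : Y ⊆ Fᶜ ∪ G := Finset.union_subset
    ((Finset.inter_subset_right).trans Finset.subset_union_left)
    ((Finset.inter_subset_right).trans Finset.subset_union_right)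
  refine le_antisymm ?_ (by have := card_le_r hYind hYsub; omega)
  have habs : ∀ z ∈ Fᶜ ∪ G, M.r (insert z Y) = M.r Y := by
    intro z hz
    by_cases hzY : z ∈ Y
    · rw [Finset.insert_eq_self.2 hzY]
    rcases Finset.mem_union.1 hz with hzc | hzG
    · -- z ∈ Fᶜ : absorbed by I ∩ Fᶜ
      have h1 : M.r (insert z (I ∩ Fᶜ)) = M.r (I ∩ Fᶜ) := by
        have hle : M.r (insert z (I ∩ Fᶜ)) ≤ M.r Fᶜ :=
          r_mono (Finset.insert_subset hzc Finset.inter_subset_right)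
        have hge : M.r Fᶜ ≤ M.r (insert z (I ∩ Fᶜ)) := by
          have h2 := card_le_r (M.subset_indep hI1 Finset.inter_subset_left)
            (Finset.subset_insert z (I ∩ Fᶜ))
          omega
        rw [indep_r (M.subset_indep hI1 Finset.inter_subset_left), hI3]
        omega
      exact absorb h1 (by rw [hY]; exact Finset.subset_union_left)
    · -- z ∈ G : C0 gives dependence
      have hzI : z ∉ I := fun h => hzY (by
        rw [hY]; exact Finset.mem_union_right _ (Finset.mem_inter.2 ⟨h, hzG⟩))
      have := no_indep_insert hk hG hGlev H hI1 hI2 hI3 hzG hzI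
      exact dep_insert_r hYind (hY ▸ this)
  have h2 := absorb_set habs
  have h3 : M.r (Fᶜ ∪ G) ≤ M.r (Y ∪ (Fᶜ ∪ G)) := r_mono Finset.subset_union_right
  rw [h2, indep_r hYind, hYcard] at h3
  exact h3

end FinMatroid
namespace FinMatroid
variable {α : Type*} [Fintype α] [DecidableEq α]
variable {M : FinMatroid α} {F : Finset α} {k : ℕ} {a : α → ℝ}

lemma key_vanish (hm1 : M.r Fᶜ + 1 ≤ k) (hkr : k ≤ M.r Finset.univ) (hcl : M.ClosedSet Fᶜ)
    (hthird : M.kInseparable k F ∨ k < M.r Finset.univ)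
    (H : ∀ I, M.Indep I → I.card = k → (I ∩ Fᶜ).card = M.r Fᶜ → ∑ x ∈ I ∩ F, a x = 0) :
    ∀ e ∈ F, a e = 0 := by
  classical
  obtain ⟨B, hB1, hB2, hB3⟩ := M.exists_basis Fᶜ
  -- a tight set exists
  obtain ⟨I, hI0, _, hI1, hI2⟩ := extend_to hB2 (Finset.subset_univ B)
    (n := k) (by omega) hkr
  have hI3 : (I ∩ Fᶜ).card = M.r Fᶜ := by
    rw [inter_compl_eq_basis hI1 hB1 hB3 hI0, hB3]
  have hIF : (I ∩ F).card = k - M.r Fᶜ := by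
    have := card_inter_compl I F
    omega
  -- `a` is constant on F
  have hconst : ∀ x ∈ F, ∀ y ∈ F, a x = a y := by
    rcases lt_or_eq_of_le hkr with hlt | heq
    · exact fun x hx y hy => constA hm1 hlt hcl H hx hy
    · have hins : M.kInseparable k F := by
        rcases hthird with h | h
        · exact h
        · omega
      by_contra hne
      push_neg at hne
      obtain ⟨x, hx, y, hy, hxy⟩ := hne
      set F₁ := F.filter (fun g => a g = a x) with hF₁
      set F₂ := F.filter (fun g => ¬ a g = a x) with hF₂
      have hxF₁ : x ∈ F₁ := Finset.mem_filter.2 ⟨hx, rfl⟩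
      have hyF₂ : y ∈ F₂ := Finset.mem_filter.2 ⟨hy, fun h => hxy h.symm⟩
      have hsub₁ : F₁ ⊆ F := Finset.filter_subset _ _
      have hsub₂ : F₂ ⊆ F := Finset.filter_subset _ _
      have hlev₁ : ∀ g ∈ F₁, ∀ h ∈ F, a h = a g → h ∈ F₁ := by
        intro g hg h hh hah
        exact Finset.mem_filter.2 ⟨hh, hah.trans (Finset.mem_filter.1 hg).2⟩
      have hlev₂ : ∀ g ∈ F₂, ∀ h ∈ F, a h = a g → h ∈ F₂ := by
        intro g hg h hh hah
        exact Finset.mem_filter.2 ⟨hh, fun hha => (Finset.mem_filter.1 hg).2 (hah ▸ hha ▸ rfl)⟩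
      have hr₁ := rank_compl_union heq hsub₁ hlev₁ H hI1 hI2 hI3
      have hr₂ := rank_compl_union heq hsub₂ hlev₂ H hI1 hI2 hI3
      -- complements
      have hc₁ : F₁ᶜ = Fᶜ ∪ F₂ := by
        ext z
        simp only [Finset.mem_compl, hF₁, hF₂, Finset.mem_filter, Finset.mem_union]
        tauto
      have hc₂ : F₂ᶜ = Fᶜ ∪ F₁ := by
        ext z
        simp only [Finset.mem_compl, hF₁, hF₂, Finset.mem_filter, Finset.mem_union]
        tauto
      -- cardinalities add up
      have hadd : (I ∩ F₁).card + (I ∩ F₂).card = (I ∩ F).card := by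
        have h1 : I ∩ F₁ = (I ∩ F).filter (fun g => a g = a x) := by
          ext z
          simp only [hF₁, Finset.mem_filter, Finset.mem_inter]
          tauto
        have h2 : I ∩ F₂ = (I ∩ F).filter (fun g => ¬ a g = a x) := by
          ext z
          simp only [hF₂, Finset.mem_filter, Finset.mem_inter]
          tauto
        rw [h1, h2]
        exact Finset.card_filter_add_card_filter_not _
      refine hins ⟨F₁, F₂, ?_, ?_, ?_, ?_, ?_⟩
      · exact Finset.ne_empty_of_mem hxF₁
      · exact Finset.ne_empty_of_mem hyF₂
      · exact Finset.disjoint_filter_filter_not F F _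
      · rw [hF₁, hF₂]
        exact Finset.filter_union_filter_not_eq _ F
      · unfold FinMatroid.krank
        rw [hc₁, hc₂, hr₁, hr₂]
        push_cast
        omega
  -- conclude
  intro e he
  have hsum := H I hI1 hI2 hI3
  have hrw : ∑ z ∈ I ∩ F, a z = ((I ∩ F).card : ℝ) * a e := by
    rw [Finset.sum_congr rfl (fun z hz => hconst z (Finset.mem_inter.1 hz).2 e he)]
    rw [Finset.sum_const, nsmul_eq_mul]
  rw [hrw, hIF] at hsum
  have hne : ((k - M.r Fᶜ : ℕ) : ℝ) ≠ 0 := by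
    have : 1 ≤ k - M.r Fᶜ := by omega
    positivity
  exact (mul_eq_zero.1 hsum).resolve_left hne

end FinMatroid
section Final
variable {α : Type*} [Fintype α] [DecidableEq α]

/-- a linear functional on `{e // e ∈ F} → ℝ` given by weights -/
noncomputable def wtFun (F : Finset α) (b : α → ℝ) : ({e : α // e ∈ F} → ℝ) →ₗ[ℝ] ℝ where
  toFun y := ∑ i : {e : α // e ∈ F}, b i.val * y i
  map_add' y z := by simp [mul_add, Finset.sum_add_distrib]
  map_smul' c y := by simp [Finset.mul_sum, mul_left_comm]

lemma wtFun_single (F : Finset α) (b : α → ℝ) (g : α) (hg : g ∈ F) :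
    wtFun F b (Pi.single ⟨g, hg⟩ 1) = b g := by
  show ∑ i : {e : α // e ∈ F}, b i.val * (Pi.single (⟨g, hg⟩ : {e : α // e ∈ F}) (1:ℝ) :
    {e : α // e ∈ F} → ℝ) i = b g
  simp only [wtFun, LinearMap.coe_mk, AddHom.coe_mk, Pi.single_apply]
  rw [Finset.sum_eq_single (⟨g, hg⟩ : {e : α // e ∈ F})]
  · simp
  · intro i _ hi
    rw [if_neg hi, mul_zero]
  · simp

lemma sum_subtype_incVec (F : Finset α) (b : α → ℝ) (I : Finset α) :
    ∑ i : {e : α // e ∈ F}, b i.val * incVec I i.val = ∑ e ∈ I ∩ F, b e := by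
  classical
  rw [Finset.univ_eq_attach, Finset.sum_attach F (fun e => b e * incVec I e)]
  unfold incVec
  simp only [mul_ite, mul_one, mul_zero]
  rw [Finset.sum_ite_mem F I b, Finset.inter_comm]

lemma span_ne_top_of_orth {F : Finset α} (b : α → ℝ) (T : Set ({e : α // e ∈ F} → ℝ))
    (hT : ∀ y ∈ T, ∑ i : {e : α // e ∈ F}, b i.val * y i = 0)
    (g : α) (hg : g ∈ F) (hbg : b g ≠ 0) : Submodule.span ℝ T ≠ ⊤ := by
  intro htop
  have hker : Submodule.span ℝ T ≤ LinearMap.ker (wtFun F b) :=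
    Submodule.span_le.2 fun y hy => LinearMap.mem_ker.2 (hT y hy)
  rw [htop, top_le_iff, LinearMap.ker_eq_top] at hker
  have := wtFun_single F b g hg
  rw [hker] at this
  simp at this
  exact hbg this.symm

end Final

section MainThm
variable {α : Type*} [Fintype α] [DecidableEq α]

lemma tightcard_iff (M : FinMatroid α) {k : ℕ} {I F : Finset α} (hIc : I.card = k) :
    ((I ∩ F).card : ℤ) = M.krank k F ↔ (I ∩ Fᶜ).card = M.r Fᶜ := by
  have := FinMatroid.card_inter_compl I F
  unfold FinMatroid.krank
  omega

theorem tight_vectors_span_iff' {α : Type*} [Fintype α] [DecidableEq α]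
    (M : FinMatroid α) (k : ℕ) (hk0 : 0 < k) (hkr : k ≤ M.r Finset.univ)
    (F : Finset α) (hF : F ≠ ∅) :
    Submodule.span ℝ {y : {e : α // e ∈ F} → ℝ |
        ∃ I : Finset α, M.Indep I ∧ I.card = k ∧
          ((I ∩ F).card : ℤ) = M.krank k F ∧ y = fun e => incVec I e.val} = ⊤ ↔
      (1 ≤ M.krank k F ∧ M.ClosedSet Fᶜ ∧
        (M.kInseparable k F ∨ k < M.r Finset.univ)) := by
  classical
  set T : Set ({e : α // e ∈ F} → ℝ) := {y : {e : α // e ∈ F} → ℝ |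
        ∃ I : Finset α, M.Indep I ∧ I.card = k ∧
          ((I ∩ F).card : ℤ) = M.krank k F ∧ y = fun e => incVec I e.val} with hTdef
  obtain ⟨g₀, hg₀⟩ := Finset.nonempty_iff_ne_empty.2 hF
  constructor
  · intro htop
    -- (1) 1 ≤ krank
    have hkrank1 : 1 ≤ M.krank k F := by
      by_contra h
      push_neg at h
      refine span_ne_top_of_orth (fun z => if z = g₀ then 1 else 0) T ?_ g₀ hg₀ (by simp) htop
      rintro y ⟨I, hI1, hI2, hI3, rfl⟩
      refine (sum_subtype_incVec F (fun z => if z = g₀ then (1:ℝ) else 0) I).trans ?_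
      have hc : (I ∩ F).card = 0 := by omega
      rw [Finset.card_eq_zero.1 hc, Finset.sum_empty]
    -- (2) closed
    have hclosed : M.ClosedSet Fᶜ := by
      intro e he'
      have heF : e ∈ F := by simpa using he'
      by_contra hcon
      push_neg at hcon
      refine absurd htop (span_ne_top_of_orth (fun z => if z = e then 1 else 0) T ?_ e heF
        (by simp))
      rintro y ⟨I, hI1, hI2, hI3, rfl⟩
      refine (sum_subtype_incVec F (fun z => if z = e then (1:ℝ) else 0) I).trans ?_
      have hIB : (I ∩ Fᶜ).card = M.r Fᶜ := (tightcard_iff M hI2).1 hI3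
      have heI : e ∉ I := by
        intro heI
        have heB : e ∉ I ∩ Fᶜ := fun h => by simpa [heF] using (Finset.mem_inter.1 h).2
        have h1 : M.Indep (insert e (I ∩ Fᶜ)) :=
          M.subset_indep hI1 (Finset.insert_subset heI Finset.inter_subset_left)
        have h2 := FinMatroid.card_le_r h1
          (Finset.insert_subset_insert e Finset.inter_subset_right)
        rw [Finset.card_insert_of_notMem heB, hIB] at h2
        omega
      have : e ∉ I ∩ F := fun h => heI (Finset.mem_inter.1 h).1
      rw [Finset.sum_ite_eq' (I ∩ F) e (fun _ => (1:ℝ)), if_neg this]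
    -- (3)
    have hthird : M.kInseparable k F ∨ k < M.r Finset.univ := by
      by_contra h
      push_neg at h
      obtain ⟨hsep', hge⟩ := h
      obtain ⟨F₁, F₂, hne1, hne2, hdisj, hunion, hkr2⟩ := not_not.1 hsep'
      have hsub1 : F₁ ⊆ F := hunion ▸ Finset.subset_union_left
      have hsub2 : F₂ ⊆ F := hunion ▸ Finset.subset_union_right
      set b : α → ℝ := fun z => if z ∈ F₁ then ((M.krank k F₂ : ℤ) : ℝ)
        else if z ∈ F₂ then -((M.krank k F₁ : ℤ) : ℝ) else 0 with hb
      have hvanish : ∀ y ∈ T, ∑ i : {e : α // e ∈ F}, b i.val * y i = 0 := by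
        rintro y ⟨I, hI1, hI2, hI3, rfl⟩
        refine (sum_subtype_incVec F b I).trans ?_
        -- cardinality facts
        have e1 := FinMatroid.card_inter_compl I F₁
        have e2 := FinMatroid.card_inter_compl I F₂
        have d1 : (I ∩ F₁ᶜ).card ≤ M.r F₁ᶜ :=
          FinMatroid.card_le_r (M.subset_indep hI1 Finset.inter_subset_left)
            Finset.inter_subset_right
        have d2 : (I ∩ F₂ᶜ).card ≤ M.r F₂ᶜ :=
          FinMatroid.card_le_r (M.subset_indep hI1 Finset.inter_subset_left)
            Finset.inter_subset_right
        have hsplit : I ∩ F = (I ∩ F₁) ∪ (I ∩ F₂) := by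
          rw [← hunion, Finset.inter_union_distrib_left]
        have hdisj' : Disjoint (I ∩ F₁) (I ∩ F₂) :=
          hdisj.mono Finset.inter_subset_right Finset.inter_subset_right
        have hcards : (I ∩ F₁).card + (I ∩ F₂).card = (I ∩ F).card := by
          rw [hsplit, Finset.card_union_of_disjoint hdisj']
        have hq1 : ((I ∩ F₁).card : ℤ) = M.krank k F₁ ∧ ((I ∩ F₂).card : ℤ) = M.krank k F₂ := by
          unfold FinMatroid.krank at hI3 hkr2 ⊢
          omega
        rw [hsplit, Finset.sum_union hdisj']
        have s1 : ∑ e ∈ I ∩ F₁, b e = ((I ∩ F₁).card : ℝ) * ((M.krank k F₂ : ℤ) : ℝ) := by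
          rw [Finset.sum_congr rfl (fun z hz => ?_), Finset.sum_const, nsmul_eq_mul]
          rw [hb]
          simp only [if_pos (Finset.mem_inter.1 hz).2]
        have s2 : ∑ e ∈ I ∩ F₂, b e = ((I ∩ F₂).card : ℝ) * (-((M.krank k F₁ : ℤ) : ℝ)) := by
          rw [Finset.sum_congr rfl (fun z hz => ?_), Finset.sum_const, nsmul_eq_mul]
          have hz2 : z ∈ F₂ := (Finset.mem_inter.1 hz).2
          have hz1 : z ∉ F₁ := fun h => (Finset.disjoint_left.1 hdisj) h hz2
          rw [hb]
          simp only [if_neg hz1, if_pos hz2]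
        rw [s1, s2]
        have c1 : ((I ∩ F₁).card : ℝ) = ((M.krank k F₁ : ℤ) : ℝ) := by exact_mod_cast hq1.1
        have c2 : ((I ∩ F₂).card : ℝ) = ((M.krank k F₂ : ℤ) : ℝ) := by exact_mod_cast hq1.2
        rw [c1, c2]
        ring
      by_cases ha2 : M.krank k F₂ = 0
      · -- then a₁ ≥ 1, use g ∈ F₂
        obtain ⟨g, hg⟩ := Finset.nonempty_iff_ne_empty.2 hne2
        have hg1 : g ∉ F₁ := fun h => (Finset.disjoint_left.1 hdisj) h hg
        refine absurd htop (span_ne_top_of_orth b T hvanish g (hsub2 hg) ?_)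
        rw [hb]
        simp only [if_neg hg1, if_pos hg, ne_eq, neg_eq_zero]
        have : M.krank k F₁ ≠ 0 := by omega
        exact_mod_cast this
      · obtain ⟨g, hg⟩ := Finset.nonempty_iff_ne_empty.2 hne1
        refine absurd htop (span_ne_top_of_orth b T hvanish g (hsub1 hg) ?_)
        rw [hb]
        simp only [if_pos hg, ne_eq]
        exact_mod_cast ha2
    exact ⟨hkrank1, hclosed, hthird⟩
  · rintro ⟨h1, h2, h3⟩
    by_contra hne
    have hlt : Submodule.span ℝ T < ⊤ := lt_top_iff_ne_top.2 hne
    obtain ⟨φ, hφ0, hφ⟩ := Submodule.exists_dual_map_eq_bot_of_lt_top hlt inferInstance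
    set b : α → ℝ := fun e => if h : e ∈ F then φ (Pi.single ⟨e, h⟩ 1) else 0 with hbdef
    have hm1 : M.r Fᶜ + 1 ≤ k := by
      unfold FinMatroid.krank at h1
      omega
    have hvan : ∀ v ∈ T, φ v = 0 := by
      intro v hv
      have : φ v ∈ Submodule.map φ (Submodule.span ℝ T) :=
        ⟨v, Submodule.subset_span hv, rfl⟩
      rw [hφ] at this
      simpa using this
    have hsingle : ∀ i : {e : α // e ∈ F}, φ (fun j => if i = j then (1:ℝ) else 0) = b i.val := by
      intro i
      have h4 : (fun j => if i = j then (1:ℝ) else 0) = Pi.single i 1 := by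
        funext j
        simp [Pi.single_apply, eq_comm]
      rw [h4]
      show φ (Pi.single i 1) = if h : (i : α) ∈ F then φ (Pi.single ⟨i.val, h⟩ 1) else 0
      rw [dif_pos i.prop]
    have key0 : ∀ I, M.Indep I → I.card = k → (I ∩ Fᶜ).card = M.r Fᶜ →
        ∑ x ∈ I ∩ F, b x = 0 := by
      intro I hI hIc hIB
      have hmem : (fun e : {e : α // e ∈ F} => incVec I e.val) ∈ T :=
        ⟨I, hI, hIc, (tightcard_iff M hIc).2 hIB, rfl⟩
      have h0 := hvan _ hmem
      rw [LinearMap.pi_apply_eq_sum_univ] at h0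
      rw [← sum_subtype_incVec F b I]
      rw [← h0]
      refine Finset.sum_congr rfl (fun i _ => ?_)
      rw [hsingle i, smul_eq_mul, mul_comm]
    have hzero := FinMatroid.key_vanish hm1 hkr h2 h3 key0
    refine hφ0 ?_
    apply LinearMap.ext
    intro v
    rw [LinearMap.pi_apply_eq_sum_univ]
    refine (Finset.sum_eq_zero (fun i _ => ?_)).trans rfl  -- sum over i
    rw [hsingle i, hzero i.val i.prop, smul_zero]

end MainThm

/-- criterion for the restrictions to F of the incidence vectors of
the tight independent k-sets to span ℝ^F. -/
theorem tight_vectors_span_iff {α : Type*} [Fintype α] [DecidableEq α]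
    (M : FinMatroid α) (k : ℕ) (hk0 : 0 < k) (hkr : k ≤ M.r Finset.univ)
    (F : Finset α) (hF : F ≠ ∅) :
    Submodule.span ℝ {y : {e : α // e ∈ F} → ℝ |
        ∃ I : Finset α, M.Indep I ∧ I.card = k ∧
          ((I ∩ F).card : ℤ) = M.krank k F ∧ y = fun e => incVec I e.val} = ⊤ ↔
      (1 ≤ M.krank k F ∧ M.ClosedSet Fᶜ ∧
        (M.kInseparable k F ∨ k < M.r Finset.univ)) := by
  exact tight_vectors_span_iff' M k hk0 hkr F hF
end
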